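/- Let k ≥ 1 be an integer, let I be a k-discrete DPG, and let G_k = {0, 1/k, 2/k, …, 1}. Let A be a location profile with A_j ∈ G_k for all j ∈ N, and suppose agent i has a beneficial jump, i.e., there exists x ∈ [0,1] with u_i(A^{i↦x}) > u_i(A). Then there exists x* ∈ G_k such that u_i(A^{i↦x*}) ≥ u_i(A^{i↦y}) for all y ∈ [0,1], and moreover u_i(A^{i↦x*}) ≥ u_i(A) + 1/k. -/

import Mathlib

open Finset

/-- A distance preservation game (DPG): a finite set of agents `N`, for each agent `i` a
relationship set `M i ⊆ N \ {i}`, and an ideal distance `d i j ∈ [0,1]` for each `j ∈ M i`. -/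
structure DPG (N : Type) [Fintype N] [DecidableEq N] where
  M : N → Finset N
  notMem_self : ∀ i, i ∉ M i
  d : N → N → ℝ
  d_nonneg : ∀ i j, j ∈ M i → 0 ≤ d i j
  d_le_one : ∀ i j, j ∈ M i → d i j ≤ 1

variable {N : Type} [Fintype N] [DecidableEq N]

/-- The utility of agent `i` from agent `j` under location profile `A`. -/
def DPG.utilPair (I : DPG N) (A : N → ℝ) (i j : N) : ℝ :=
  1 - |(|A i - A j|) - I.d i j|

/-- The utility of agent `i` under location profile `A`. -/
def DPG.util (I : DPG N) (A : N → ℝ) (i : N) : ℝ :=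
  ∑ j ∈ I.M i, I.utilPair A i j

/-- The social welfare of a location profile. -/
def DPG.SW (I : DPG N) (A : N → ℝ) : ℝ := ∑ i, I.util A i

/-- A valid location profile: every agent is located in the unit interval. -/
def IsProfile (A : N → ℝ) : Prop := ∀ i, A i ∈ Set.Icc (0:ℝ) 1

/-- A location profile is jump stable if no agent can increase their utility by jumping
to another location in the unit interval. -/
def DPG.JumpStable (I : DPG N) (A : N → ℝ) : Prop :=
  ∀ i : N, ∀ x ∈ Set.Icc (0:ℝ) 1, I.util (Function.update A i x) i ≤ I.util A i

/-- A DPG is symmetric if `j ∈ M i` implies `i ∈ M j` and `d i j = d j i`. -/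
def DPG.Symmetric (I : DPG N) : Prop :=
  ∀ i j, j ∈ I.M i → i ∈ I.M j ∧ I.d i j = I.d j i

/-- The grid `{0, 1/k, 2/k, …, 1}` of multiples of `1/k` in the unit interval. -/
def grid (k : ℕ) : Set ℝ := {x | ∃ m : ℕ, m ≤ k ∧ x = (m : ℝ) / k}

/-- A DPG is `k`-discrete if all ideal distances are multiples of `1/k`. -/
def DPG.Discrete (I : DPG N) (k : ℕ) : Prop :=
  ∀ i j, j ∈ I.M i → I.d i j ∈ grid k

private lemma cellEq (a d g1 g2 y : ℝ) (h1 : g1 ≤ y) (h2 : y ≤ g2)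
    (ha : a ≤ g1 ∨ g2 ≤ a) (hp : a + d ≤ g1 ∨ g2 ≤ a + d)
    (hm : a - d ≤ g1 ∨ g2 ≤ a - d) :
    (g2 - g1) * (1 - |(|y - a|) - d|) =
      (g2 - y) * (1 - |(|g1 - a|) - d|) + (y - g1) * (1 - |(|g2 - a|) - d|) := by
  rcases ha with ha | ha
  · rw [abs_of_nonneg (show (0:ℝ) ≤ y - a by linarith),
        abs_of_nonneg (show (0:ℝ) ≤ g1 - a by linarith),
        abs_of_nonneg (show (0:ℝ) ≤ g2 - a by linarith)]
    rcases hp with hp | hp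
    · rw [abs_of_nonneg (show (0:ℝ) ≤ y - a - d by linarith),
          abs_of_nonneg (show (0:ℝ) ≤ g1 - a - d by linarith),
          abs_of_nonneg (show (0:ℝ) ≤ g2 - a - d by linarith)]
      ring
    · rw [abs_of_nonpos (show y - a - d ≤ 0 by linarith),
          abs_of_nonpos (show g1 - a - d ≤ 0 by linarith),
          abs_of_nonpos (show g2 - a - d ≤ 0 by linarith)]
      ring
  · rw [abs_of_nonpos (show y - a ≤ 0 by linarith),
        abs_of_nonpos (show g1 - a ≤ 0 by linarith),
        abs_of_nonpos (show g2 - a ≤ 0 by linarith)]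
    rcases hm with hm | hm
    · rw [abs_of_nonpos (show -(y - a) - d ≤ 0 by linarith),
          abs_of_nonpos (show -(g1 - a) - d ≤ 0 by linarith),
          abs_of_nonpos (show -(g2 - a) - d ≤ 0 by linarith)]
      ring
    · rw [abs_of_nonneg (show (0:ℝ) ≤ -(y - a) - d by linarith),
          abs_of_nonneg (show (0:ℝ) ≤ -(g1 - a) - d by linarith),
          abs_of_nonneg (show (0:ℝ) ≤ -(g2 - a) - d by linarith)]
      ring

/-- In a `k`-discrete DPG, if all agents are located on the grid `{0, 1/k, …, 1}` and agent
`i` has a beneficial jump, then there is a grid point `x*` maximizing agent `i`'s utility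
over `[0,1]`, and jumping there increases agent `i`'s utility by at least `1/k`. -/
theorem stmt8 (k : ℕ) (hk : 1 ≤ k) (I : DPG N) (hdisc : I.Discrete k)
    (A : N → ℝ) (hA : ∀ j, A j ∈ grid k) (i : N)
    (hjump : ∃ x ∈ Set.Icc (0:ℝ) 1, I.util A i < I.util (Function.update A i x) i) :
    ∃ xstar ∈ grid k,
      (∀ y ∈ Set.Icc (0:ℝ) 1,
        I.util (Function.update A i y) i ≤ I.util (Function.update A i xstar) i) ∧
      I.util A i + 1/k ≤ I.util (Function.update A i xstar) i := by
  have hk0 : (0:ℝ) < k := by exact_mod_cast hk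
  have hij : ∀ j ∈ I.M i, j ≠ i := fun j hj h => I.notMem_self i (h ▸ hj)
  have hφ : ∀ x : ℝ, I.util (Function.update A i x) i
      = ∑ j ∈ I.M i, (1 - |(|x - A j|) - I.d i j|) := by
    intro x
    unfold DPG.util DPG.utilPair
    refine Finset.sum_congr rfl fun j hj => ?_
    rw [Function.update_self, Function.update_of_ne (hij j hj)]
  -- breakpoints on the grid lie outside any open grid cell
  have hbp : ∀ (m : ℕ) (r : ℤ), (r:ℝ)/k ≤ (m:ℝ)/k ∨ ((m:ℝ)+1)/k ≤ (r:ℝ)/k := by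
    intro m r
    rcases le_or_gt r m with h | h
    · left
      rw [div_le_div_iff₀ hk0 hk0]
      have h' : (r:ℝ) ≤ (m:ℝ) := by exact_mod_cast h
      exact mul_le_mul_of_nonneg_right h' hk0.le
    · right
      rw [div_le_div_iff₀ hk0 hk0]
      have h' : ((m:ℝ) + 1) ≤ (r:ℝ) := by exact_mod_cast h
      exact mul_le_mul_of_nonneg_right h' hk0.le
  -- affine interpolation on each cell
  have cellSum : ∀ (m : ℕ) (y : ℝ), (m:ℝ)/k ≤ y → y ≤ ((m:ℝ)+1)/k →
      (1/(k:ℝ)) * I.util (Function.update A i y) i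
        = (((m:ℝ)+1)/k - y) * I.util (Function.update A i ((m:ℝ)/k)) i
          + (y - (m:ℝ)/k) * I.util (Function.update A i (((m:ℝ)+1)/k)) i := by
    intro m y hy1 hy2
    rw [hφ, hφ, hφ, Finset.mul_sum, Finset.mul_sum, Finset.mul_sum, ← Finset.sum_add_distrib]
    refine Finset.sum_congr rfl fun j hj => ?_
    have hc : (1/(k:ℝ)) = ((m:ℝ)+1)/k - (m:ℝ)/k := by ring
    rw [hc]
    obtain ⟨m2, _, h2⟩ := hA j
    obtain ⟨m3, _, h3⟩ := hdisc i j hj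
    have e2 : A j = ((m2:ℤ):ℝ)/k := by rw [h2]; norm_num
    have e3 : I.d i j = ((m3:ℤ):ℝ)/k := by rw [h3]; norm_num
    apply cellEq _ _ _ _ _ hy1 hy2
    · rw [e2]; exact hbp m m2
    · rw [e2, e3, ← add_div, ← Int.cast_add]; exact hbp m (m2 + m3)
    · rw [e2, e3, div_sub_div_same, ← Int.cast_sub]; exact hbp m (m2 - m3)
  -- on each cell, utility is at most the max of the two endpoint values
  have cellMax : ∀ (m : ℕ) (y : ℝ), (m:ℝ)/k ≤ y → y ≤ ((m:ℝ)+1)/k →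
      I.util (Function.update A i y) i
        ≤ max (I.util (Function.update A i ((m:ℝ)/k)) i)
              (I.util (Function.update A i (((m:ℝ)+1)/k)) i) := by
    intro m y hy1 hy2
    have h1 := cellSum m y hy1 hy2
    set u1 := I.util (Function.update A i ((m:ℝ)/k)) i with hu1
    set u2 := I.util (Function.update A i (((m:ℝ)+1)/k)) i with hu2
    set M := max u1 u2 with hM
    have hα : (0:ℝ) ≤ ((m:ℝ)+1)/k - y := by linarith
    have hβ : (0:ℝ) ≤ y - (m:ℝ)/k := by linarith
    have t1 := mul_le_mul_of_nonneg_left (le_max_left u1 u2) hα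
    have t2 := mul_le_mul_of_nonneg_left (le_max_right u1 u2) hβ
    have hd : (((m:ℝ)+1)/k - y) * M + (y - (m:ℝ)/k) * M = (1/(k:ℝ)) * M := by ring
    have hmain : (1/(k:ℝ)) * I.util (Function.update A i y) i ≤ (1/(k:ℝ)) * M := by
      linarith
    have hpos : (0:ℝ) < 1/(k:ℝ) := by positivity
    exact le_of_mul_le_mul_left hmain hpos
  -- every point of [0,1] lies in some grid cell
  have hcell : ∀ y : ℝ, 0 ≤ y → y ≤ 1 →
      ∃ m : ℕ, m + 1 ≤ k ∧ (m:ℝ)/k ≤ y ∧ y ≤ ((m:ℝ)+1)/k := by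
    intro y hy0 hy1
    have hflnn : (0:ℤ) ≤ ⌊y * k⌋ := Int.floor_nonneg.mpr (by positivity)
    by_cases hcase : (⌊y * k⌋).toNat + 1 ≤ k
    · refine ⟨(⌊y * k⌋).toNat, hcase, ?_, ?_⟩
      · rw [div_le_iff₀ hk0]
        have h' : (((⌊y * k⌋).toNat : ℤ) : ℝ) ≤ y * k := by
          rw [Int.toNat_of_nonneg hflnn]; exact Int.floor_le _
        exact_mod_cast h'
      · rw [le_div_iff₀ hk0]
        have h' : y * k ≤ (((⌊y * k⌋).toNat : ℤ) : ℝ) + 1 := by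
          rw [Int.toNat_of_nonneg hflnn]; exact le_of_lt (Int.lt_floor_add_one _)
        exact_mod_cast h'
    · refine ⟨k - 1, by omega, ?_, ?_⟩
      · have h1 : (k:ℤ) ≤ ⌊y * k⌋ := by omega
        have hky : (k:ℝ) ≤ y * k := by
          calc (k:ℝ) = ((k:ℤ):ℝ) := by norm_cast
            _ ≤ (⌊y * k⌋ : ℝ) := by exact_mod_cast h1
            _ ≤ y * k := Int.floor_le _
        have hy1' : (1:ℝ) ≤ y := by nlinarith
        have hc : ((k - 1 : ℕ) : ℝ) = (k:ℝ) - 1 := by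
          rw [Nat.cast_sub hk]; norm_num
        rw [hc, div_le_iff₀ hk0]
        nlinarith
      · have hc : ((k - 1 : ℕ) : ℝ) = (k:ℝ) - 1 := by
          rw [Nat.cast_sub hk]; norm_num
        rw [hc, sub_add_cancel, div_self hk0.ne']
        exact hy1
  -- the finite grid and its maximizer
  set gridF : Finset ℝ := (Finset.range (k+1)).image (fun m : ℕ => (m:ℝ)/k) with hgridF
  have hgridF_ne : gridF.Nonempty := ⟨((0:ℕ):ℝ)/k, Finset.mem_image.mpr ⟨0, by simp, rfl⟩⟩
  obtain ⟨xstar, hxsF, hmax⟩ :=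
    Finset.exists_max_image gridF (fun x => I.util (Function.update A i x) i) hgridF_ne
  have hgridF_grid : ∀ x ∈ gridF, x ∈ grid k := by
    intro x hx
    obtain ⟨m, hm, rfl⟩ := Finset.mem_image.mp hx
    exact ⟨m, Nat.lt_succ_iff.mp (Finset.mem_range.mp hm), rfl⟩
  have hmemF : ∀ m : ℕ, m ≤ k → ((m:ℝ)/k) ∈ gridF := by
    intro m hm
    exact Finset.mem_image.mpr ⟨m, Finset.mem_range.mpr (by omega), rfl⟩
  -- part 1: xstar maximizes over [0,1]
  have part1 : ∀ y ∈ Set.Icc (0:ℝ) 1,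
      I.util (Function.update A i y) i ≤ I.util (Function.update A i xstar) i := by
    intro y hy
    obtain ⟨m, hm1, hby1, hby2⟩ := hcell y hy.1 hy.2
    have hg1 : ((m:ℝ)/k) ∈ gridF := hmemF m (by omega)
    have hg2 : (((m:ℝ)+1)/k) ∈ gridF := by
      have : (((m+1:ℕ):ℝ)/k) ∈ gridF := hmemF (m+1) hm1
      simpa using this
    refine le_trans (cellMax m y hby1 hby2) (max_le (hmax _ hg1) (hmax _ hg2))
  -- values at grid points are integers over k
  have hint : ∀ x ∈ grid k, ∃ z : ℤ, (k:ℝ) * I.util (Function.update A i x) i = (z:ℝ) := by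
    intro x hx
    obtain ⟨m1, _, rfl⟩ := hx
    have hmem : (k:ℝ) * I.util (Function.update A i ((m1:ℝ)/k)) i
        ∈ AddSubgroup.zmultiples (1:ℝ) := by
      rw [hφ, Finset.mul_sum]
      refine AddSubgroup.sum_mem _ fun j hj => ?_
      obtain ⟨m2, _, h2⟩ := hA j
      obtain ⟨m3, _, h3⟩ := hdisc i j hj
      rw [h2, h3]
      refine AddSubgroup.mem_zmultiples_iff.mpr ⟨(k:ℤ) - |(|(m1:ℤ) - m2|) - m3|, ?_⟩
      rw [zsmul_eq_mul, mul_one]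
      have e1 : (m1:ℝ)/k - (m2:ℝ)/k = ((m1:ℝ) - m2)/k := by ring
      rw [e1, abs_div, abs_of_pos hk0, div_sub_div_same, abs_div, abs_of_pos hk0,
        mul_sub, mul_one, mul_div_cancel₀ _ hk0.ne']
      push_cast
      ring
    obtain ⟨z, hz⟩ := AddSubgroup.mem_zmultiples_iff.mp hmem
    exact ⟨z, by rw [← hz, zsmul_eq_mul, mul_one]⟩
  have hxs_grid : xstar ∈ grid k := hgridF_grid xstar hxsF
  refine ⟨xstar, hxs_grid, part1, ?_⟩
  -- part 2: improvement of at least 1/k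
  obtain ⟨x, hx01, hlt⟩ := hjump
  have hAi : Function.update A i (A i) = A := Function.update_eq_self i A
  have hUA : I.util A i = I.util (Function.update A i (A i)) i := by rw [hAi]
  obtain ⟨z1, hz1⟩ := hint (A i) (hA i)
  obtain ⟨z2, hz2⟩ := hint xstar hxs_grid
  have hlt2 : I.util (Function.update A i (A i)) i < I.util (Function.update A i xstar) i := by
    rw [hAi]; exact lt_of_lt_of_le hlt (part1 x hx01)
  have hzlt : (z1:ℝ) < (z2:ℝ) := by
    rw [← hz1, ← hz2]
    exact mul_lt_mul_of_pos_left hlt2 hk0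
  have hzle : (z1:ℝ) + 1 ≤ (z2:ℝ) := by
    have : z1 < z2 := by exact_mod_cast hzlt
    exact_mod_cast this
  have step : (k:ℝ) * I.util A i + 1 ≤ (k:ℝ) * I.util (Function.update A i xstar) i := by
    rw [hUA, hz1, hz2]; exact hzle
  have h2 : (k:ℝ) * (I.util A i + 1/k) ≤ (k:ℝ) * I.util (Function.update A i xstar) i := by
    rw [mul_add, mul_one_div, div_self hk0.ne']
    linarith
  exact le_of_mul_le_mul_left h2 hk0
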